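/- Let π be a pdf on ℝ and let d be a distortion function. Then for every ê ∈ ℝ, ∫_ℝ d(e) π^σ(e) de ≤ ∫_ℝ d(e − ê) π(e) de (integrals in [0, ∞]); consequently inf_{ê ∈ ℝ} ∫_ℝ d(e − ê) π^σ(e) de ≤ inf_{ê ∈ ℝ} ∫_ℝ d(e − ê) π(e) de. -/

import Mathlib

open MeasureTheory Set
open scoped ENNReal NNReal

noncomputable section

/-- A probability density function on ℝ: measurable, nonnegative (via `ℝ≥0`),
integrating to one against Lebesgue measure. -/
def IsPdf (f : ℝ → ℝ≥0) : Prop :=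
  Measurable f ∧ ∫⁻ x, (f x : ℝ≥0∞) = 1

/-- `f` is symmetric and unimodal about `c`. -/
def ASU (c : ℝ) (f : ℝ → ℝ≥0) : Prop :=
  (∀ x, f (c - x) = f (c + x)) ∧ MonotoneOn f (Iic c) ∧ AntitoneOn f (Ici c)

/-- A distortion function: measurable, even, nondecreasing on `[0, ∞)`. -/
def IsDistortion (d : ℝ → ℝ≥0∞) : Prop :=
  Measurable d ∧ (∀ x, d (-x) = d x) ∧ MonotoneOn d (Ici (0 : ℝ))

/-- Symmetric decreasing rearrangement of an `ℝ≥0∞`-valued function: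
`f^σ(x) = ∫_0^∞ 1[2|x| < vol{z : f z > ρ}] dρ`. -/
def sdr (f : ℝ → ℝ≥0∞) (x : ℝ) : ℝ≥0∞ :=
  ∫⁻ ρ in Ioi (0 : ℝ),
    if ENNReal.ofReal (2 * |x|) < volume {z : ℝ | ENNReal.ofReal ρ < f z} then 1 else 0

/-- Symmetric decreasing rearrangement of an `ℝ≥0`-valued function. -/
def sdr' (f : ℝ → ℝ≥0) : ℝ → ℝ≥0∞ := sdr fun x => (f x : ℝ≥0∞)

/-- `ξ` majorizes `π`: `∫_{-ρ}^{ρ} ξ^σ ≥ ∫_{-ρ}^{ρ} π^σ` for all `ρ ≥ 0`. -/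
def Majorizes (ξ π : ℝ → ℝ≥0) : Prop :=
  ∀ ρ : ℝ, 0 ≤ ρ → ∫⁻ x in Ioo (-ρ) ρ, sdr' π x ≤ ∫⁻ x in Ioo (-ρ) ρ, sdr' ξ x

/-- The bathtub principle: integrating `d` over the symmetric interval of measure `m`
is at most integrating `d` over any measurable set of measure `m`. -/
lemma bathtub (d : ℝ → ℝ≥0∞) (hd : IsDistortion d) (A : Set ℝ) (hA : MeasurableSet A)
    (m : ℝ≥0∞) (hm : m ≠ ⊤) (hvol : volume A = m) :
    ∫⁻ x in {x : ℝ | ENNReal.ofReal (2 * |x|) < m}, d x ≤ ∫⁻ x in A, d x := by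
  set r : ℝ := m.toReal / 2 with hrdef
  have hr0 : (0:ℝ) ≤ r := by positivity
  have hIset : {x : ℝ | ENNReal.ofReal (2 * |x|) < m} = Ioo (-r) r := by
    ext x
    simp only [mem_setOf_eq, mem_Ioo, ← abs_lt]
    rw [ENNReal.ofReal_lt_iff_lt_toReal (by positivity) hm]
    constructor <;> intro h <;> [skip; skip] <;>
      · rw [hrdef] at * ; linarith
  have hIvol : volume (Ioo (-r) r) = m := by
    rw [Real.volume_Ioo, show r - -r = m.toReal by rw [hrdef]; ring,
      ENNReal.ofReal_toReal hm]
  have habs : ∀ x : ℝ, d x = d |x| := by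
    intro x
    rcases abs_cases x with ⟨h, _⟩ | ⟨h, _⟩
    · rw [h]
    · rw [h, hd.2.1]
  have hub : ∀ x ∈ Ioo (-r) r, d x ≤ d r := by
    intro x hx
    rw [habs x]
    exact hd.2.2 (mem_Ici.2 (abs_nonneg x)) (mem_Ici.2 hr0)
      (le_of_lt (abs_lt.2 ⟨hx.1, hx.2⟩))
  have hlb : ∀ x : ℝ, x ∉ Ioo (-r) r → d r ≤ d x := by
    intro x hx
    have : r ≤ |x| := by
      by_contra hcon
      exact hx (abs_lt.1 (lt_of_not_ge hcon))
    rw [habs x]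
    exact hd.2.2 (mem_Ici.2 hr0) (mem_Ici.2 (abs_nonneg x)) this
  -- measure of symmetric differences agree
  have hcfin : volume (Ioo (-r) r ∩ A) ≠ ⊤ := by
    refine ne_top_of_le_ne_top hm ?_
    rw [← hIvol]
    exact measure_mono inter_subset_left
  have h1 : volume (Ioo (-r) r ∩ A) + volume (Ioo (-r) r \ A) = m := by
    rw [measure_inter_add_diff _ hA, hIvol]
  have h2 : volume (Ioo (-r) r ∩ A) + volume (A \ Ioo (-r) r) = m := by
    rw [inter_comm, measure_inter_add_diff _ measurableSet_Ioo, hvol]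
  have hdiff : volume (Ioo (-r) r \ A) = volume (A \ Ioo (-r) r) := by
    rw [← h2] at h1
    exact (ENNReal.add_right_inj hcfin).1 h1
  rw [hIset]
  calc ∫⁻ x in Ioo (-r) r, d x
      = (∫⁻ x in Ioo (-r) r ∩ A, d x) + ∫⁻ x in Ioo (-r) r \ A, d x :=
        (lintegral_inter_add_diff d _ hA).symm
    _ ≤ (∫⁻ x in A ∩ Ioo (-r) r, d x) + ∫⁻ x in A \ Ioo (-r) r, d x := by
        refine add_le_add ?_ ?_
        · exact le_of_eq (by rw [inter_comm])
        calc ∫⁻ x in Ioo (-r) r \ A, d x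
            ≤ ∫⁻ _ in Ioo (-r) r \ A, d r :=
              setLIntegral_mono measurable_const (fun x hx => hub x hx.1)
          _ = d r * volume (Ioo (-r) r \ A) := setLIntegral_const _ _
          _ = d r * volume (A \ Ioo (-r) r) := by rw [hdiff]
          _ = ∫⁻ _ in A \ Ioo (-r) r, d r := (setLIntegral_const _ _).symm
          _ ≤ ∫⁻ x in A \ Ioo (-r) r, d x :=
              setLIntegral_mono hd.1 (fun x hx => hlb x hx.2)
    _ = ∫⁻ x in A, d x := lintegral_inter_add_diff d A measurableSet_Ioo

/-- The inequality `D(π) ≥ D(π^σ)`: for every `ehat`,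
`∫ d(e) π^σ(e) de ≤ ∫ d(e - ehat) π(e) de`, and hence the corresponding
inequality of infima. -/
theorem stmt7 (π : ℝ → ℝ≥0) (hπ : IsPdf π) (d : ℝ → ℝ≥0∞) (hd : IsDistortion d) :
    (∀ ehat : ℝ, ∫⁻ e, d e * sdr' π e ≤ ∫⁻ e, d (e - ehat) * (π e : ℝ≥0∞)) ∧
    (⨅ ehat : ℝ, ∫⁻ e, d (e - ehat) * sdr' π e) ≤
      ⨅ ehat : ℝ, ∫⁻ e, d (e - ehat) * (π e : ℝ≥0∞) := by
  have hπm : Measurable fun z : ℝ => ((π z : ℝ≥0) : ℝ≥0∞) :=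
    measurable_coe_nnreal_ennreal.comp hπ.1
  set m : ℝ → ℝ≥0∞ := fun ρ => volume {z : ℝ | ENNReal.ofReal ρ < (π z : ℝ≥0∞)} with hmdef
  have hm_anti : Antitone m := by
    intro ρ ρ' h
    exact measure_mono fun z hz => lt_of_le_of_lt (ENNReal.ofReal_le_ofReal h) hz
  have hm_meas : Measurable m := hm_anti.measurable
  have hm_fin : ∀ ρ : ℝ, 0 < ρ → m ρ ≠ ⊤ := by
    intro ρ hρ hcon
    have h1 : volume {z : ℝ | ENNReal.ofReal ρ ≤ (π z : ℝ≥0∞)} = ⊤ :=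
      top_le_iff.1 (hcon ▸ measure_mono
        (fun z (hz : ENNReal.ofReal ρ < (π z : ℝ≥0∞)) => le_of_lt hz))
    have h2 := mul_meas_ge_le_lintegral (μ := volume) hπm (ENNReal.ofReal ρ)
    rw [hπ.2, h1, ENNReal.mul_top (ENNReal.ofReal_pos.2 hρ).ne'] at h2
    exact absurd h2 (by simp)
  -- layer cake for an NNReal value
  have layercake : ∀ a : ℝ≥0,
      (a : ℝ≥0∞) = ∫⁻ ρ in Ioi (0:ℝ),
        (if ENNReal.ofReal ρ < (a : ℝ≥0∞) then (1:ℝ≥0∞) else 0) := by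
    intro a
    have hs : MeasurableSet {ρ : ℝ | ENNReal.ofReal ρ < (a : ℝ≥0∞)} :=
      measurableSet_lt ENNReal.measurable_ofReal measurable_const
    have hfun : (fun ρ : ℝ => if ENNReal.ofReal ρ < (a:ℝ≥0∞) then (1:ℝ≥0∞) else 0)
        = {ρ : ℝ | ENNReal.ofReal ρ < (a:ℝ≥0∞)}.indicator (fun _ => 1) := by
      funext ρ
      by_cases h : ENNReal.ofReal ρ < (a:ℝ≥0∞) <;> simp [indicator, h]
    rw [hfun, lintegral_indicator hs, setLIntegral_one, Measure.restrict_apply hs]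
    have hset : {ρ : ℝ | ENNReal.ofReal ρ < (a:ℝ≥0∞)} ∩ Ioi 0 = Ioo 0 (a:ℝ) := by
      ext ρ
      simp only [mem_inter_iff, mem_setOf_eq, mem_Ioi, mem_Ioo]
      rw [← ENNReal.ofReal_coe_nnreal]
      constructor
      · rintro ⟨h1, h2⟩
        exact ⟨h2, (ENNReal.ofReal_lt_ofReal_iff_of_nonneg h2.le).1 h1⟩
      · rintro ⟨h1, h2⟩
        exact ⟨(ENNReal.ofReal_lt_ofReal_iff_of_nonneg h1.le).2 h2, h1⟩
    rw [hset, Real.volume_Ioo]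
    simp [ENNReal.ofReal_coe_nnreal]
  have key : ∀ ehat : ℝ, ∫⁻ e, d e * sdr' π e ≤ ∫⁻ e, d (e - ehat) * (π e : ℝ≥0∞) := by
    intro ehat
    -- rewrite LHS as an iterated integral and swap
    have hL : ∫⁻ e, d e * sdr' π e
        = ∫⁻ ρ in Ioi (0:ℝ), ∫⁻ e, d e *
            (if ENNReal.ofReal (2 * |e|) < m ρ then (1:ℝ≥0∞) else 0) := by
      rw [← lintegral_lintegral_swap]
      · refine lintegral_congr fun e => ?_
        show d e * sdr' π e = ∫⁻ ρ in Ioi (0:ℝ), d e *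
          (if ENNReal.ofReal (2 * |e|) < m ρ then (1:ℝ≥0∞) else 0)
        rw [sdr', sdr]
        exact (lintegral_const_mul (d e)
          (Measurable.ite
            (measurableSet_lt measurable_const hm_meas)
            measurable_const measurable_const)).symm
      · refine Measurable.aemeasurable ?_
        exact (hd.1.comp measurable_fst).mul
          (Measurable.ite
            (measurableSet_lt
              (ENNReal.measurable_ofReal.comp (measurable_fst.abs.const_mul 2))
              (hm_meas.comp measurable_snd))
            measurable_const measurable_const)
    have hR : ∫⁻ e, d (e - ehat) * (π e : ℝ≥0∞)
        = ∫⁻ ρ in Ioi (0:ℝ), ∫⁻ e, d (e - ehat) *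
            (if ENNReal.ofReal ρ < (π e : ℝ≥0∞) then (1:ℝ≥0∞) else 0) := by
      rw [← lintegral_lintegral_swap]
      · refine lintegral_congr fun e => ?_
        rw [lintegral_const_mul (d (e - ehat))
          (Measurable.ite
            (measurableSet_lt ENNReal.measurable_ofReal measurable_const)
            measurable_const measurable_const), ← layercake (π e)]
      · refine Measurable.aemeasurable ?_
        exact (hd.1.comp (measurable_fst.sub measurable_const)).mul
          (Measurable.ite
            (measurableSet_lt
              (ENNReal.measurable_ofReal.comp measurable_snd)
              (hπm.comp measurable_fst))
            measurable_const measurable_const)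
    rw [hL, hR]
    refine lintegral_mono_ae ((ae_restrict_iff' measurableSet_Ioi).2
      (Filter.Eventually.of_forall fun ρ hρ => ?_))
    have hρ0 : (0:ℝ) < ρ := hρ
    -- the slice at level ρ
    have hSmeas : MeasurableSet {e : ℝ | ENNReal.ofReal (2 * |e|) < m ρ} :=
      measurableSet_lt (ENNReal.measurable_ofReal.comp (measurable_abs.const_mul 2))
        measurable_const
    have hAmeas : MeasurableSet {e : ℝ | ENNReal.ofReal ρ < (π e : ℝ≥0∞)} :=
      measurableSet_lt measurable_const hπm
    set B : Set ℝ := (fun u : ℝ => u + ehat) ⁻¹' {e : ℝ | ENNReal.ofReal ρ < (π e : ℝ≥0∞)}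
      with hBdef
    have hBmeas : MeasurableSet B := hAmeas.preimage (measurable_add_const ehat)
    have hBvol : volume B = m ρ :=
      measure_preimage_add_right (volume : Measure ℝ) ehat
        {e : ℝ | ENNReal.ofReal ρ < (π e : ℝ≥0∞)}
    have hLinner : ∫⁻ e, d e *
        (if ENNReal.ofReal (2 * |e|) < m ρ then (1:ℝ≥0∞) else 0)
        = ∫⁻ e in {e : ℝ | ENNReal.ofReal (2 * |e|) < m ρ}, d e := by
      rw [← lintegral_indicator hSmeas]
      refine lintegral_congr fun e => ?_
      by_cases h : ENNReal.ofReal (2 * |e|) < m ρ <;> simp [indicator, h]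
    have hRinner : ∫⁻ e, d (e - ehat) *
        (if ENNReal.ofReal ρ < (π e : ℝ≥0∞) then (1:ℝ≥0∞) else 0)
        = ∫⁻ e in B, d e := by
      have step1 : ∫⁻ e, d (e - ehat) *
          (if ENNReal.ofReal ρ < (π e : ℝ≥0∞) then (1:ℝ≥0∞) else 0)
          = ∫⁻ e, {e : ℝ | ENNReal.ofReal ρ < (π e : ℝ≥0∞)}.indicator
              (fun x => d (x - ehat)) e := by
        refine lintegral_congr fun e => ?_
        by_cases h : ENNReal.ofReal ρ < (π e : ℝ≥0∞) <;> simp [indicator, h]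
      have step2 := lintegral_add_right_eq_self (μ := (volume : Measure ℝ))
        (fun e => {e : ℝ | ENNReal.ofReal ρ < (π e : ℝ≥0∞)}.indicator
          (fun x => d (x - ehat)) e) ehat
      rw [step1, ← step2, ← lintegral_indicator hBmeas]
      refine lintegral_congr fun u => ?_
      by_cases h : u + ehat ∈ {e : ℝ | ENNReal.ofReal ρ < (π e : ℝ≥0∞)}
      · simp [indicator, h, hBdef, mem_preimage, add_sub_cancel_right]
        exact fun h' => absurd h (not_lt.2 h')
      · simp [indicator, h, hBdef, mem_preimage]
        exact fun h' => absurd h' h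
    rw [hLinner, hRinner]
    exact bathtub d hd B hBmeas (m ρ) (hm_fin ρ hρ0) hBvol
  refine ⟨key, ?_⟩
  refine le_trans (iInf_le _ 0) (le_iInf fun ehat => ?_)
  simp only [sub_zero]
  exact key ehat
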